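/- If a hypergraph H with finite vertex set V and finitely many hyperedges has the local-to-global consistency property for bags, then for every subset W ⊆ V, the reduction R(H[W]) of the hypergraph induced by W on H also has the local-to-global consistency property for bags. -/

import Mathlib

variable {A : Type} [DecidableEq A]

/-- The type of `X`-tuples: functions assigning to each attribute `a ∈ X` an element
of its domain `D a`. -/
def Tup (D : A → Type) (X : Finset A) : Type := ∀ a : X, D a.1

/-- Restriction (projection) of an `X`-tuple to `Z ⊆ X`. -/
def Tup.restrict {D : A → Type} {X Z : Finset A} (h : Z ⊆ X) (t : Tup D X) : Tup D Z :=
  fun a => t ⟨a.1, h a.2⟩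

/-- A bag over `X`: a finitely supported function from `X`-tuples to ℕ. -/
abbrev Bag (D : A → Type) (X : Finset A) : Type := Tup D X →₀ ℕ

/-- The marginal of a bag on `Z ⊆ X`. -/
noncomputable def Bag.marginal {D : A → Type} {X Z : Finset A} (h : Z ⊆ X) (R : Bag D X) :
    Bag D Z := Finsupp.mapDomain (Tup.restrict h) R

/-- Two bags are consistent if a common bag over the union of schemas has them as marginals. -/
def Consistent {D : A → Type} {X Y : Finset A} (R : Bag D X) (S : Bag D Y) : Prop :=
  ∃ T : Bag D (X ∪ Y),
    Bag.marginal Finset.subset_union_left T = R ∧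
    Bag.marginal Finset.subset_union_right T = S

/-- A hypergraph: a finite set of vertices together with a finite set of hyperedges. -/
structure FinHypergraph (A : Type) where
  V : Finset A
  E : Finset (Finset A)

/-- The hypergraph induced by `W` on `H`: vertex set `W`, hyperedges the nonempty traces
`X ∩ W` of hyperedges `X` of `H`. -/
def FinHypergraph.induce [DecidableEq A] (H : FinHypergraph A) (W : Finset A) : FinHypergraph A where
  V := W
  E := (H.E.image (fun X => X ∩ W)).filter (fun X => X.Nonempty)

/-- The reduction of a hypergraph: keep exactly the hyperedges that are not properly contained
in another hyperedge. -/
def FinHypergraph.reduction [DecidableEq A] (H : FinHypergraph A) : FinHypergraph A where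
  V := H.V
  E := H.E.filter (fun X => ¬ ∃ Y ∈ H.E, X ⊂ Y)

/-- Global consistency of a collection of bags over the hyperedges of a hypergraph. -/
def GloballyConsistentColl {D : A → Type} (E : Finset (Finset A))
    (R : ∀ X ∈ E, Bag D X) : Prop :=
  ∃ T : Bag D (E.sup id), ∀ (X : Finset A) (hX : X ∈ E),
    Bag.marginal (Finset.le_sup (f := id) hX) T = R X hX

/-- The local-to-global consistency property for bags: every pairwise consistent collection of
bags over the hyperedges is globally consistent. -/
def LGCBags (D : A → Type) [DecidableEq A] (H : FinHypergraph A) : Prop :=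
  ∀ R : ∀ X ∈ H.E, Bag D X,
    (∀ (X : Finset A) (hX : X ∈ H.E) (Y : Finset A) (hY : Y ∈ H.E),
      Consistent (R X hX) (R Y hY)) →
    GloballyConsistentColl H.E R

section Aux

variable {A : Type} [DecidableEq A]

noncomputable def Tup.extend {D : A → Type} [∀ a : A, Nonempty (D a)] {Z X : Finset A}
    (t : Tup D Z) : Tup D X :=
  fun a => if h : a.1 ∈ Z then t ⟨a.1, h⟩ else Classical.arbitrary _

noncomputable def Bag.ext {D : A → Type} [∀ a : A, Nonempty (D a)] {Z X : Finset A}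
    (_h : Z ⊆ X) (S : Bag D Z) : Bag D X :=
  Finsupp.mapDomain (Tup.extend (X := X)) S

theorem Bag.marginal_marginal {D : A → Type} {X Y Z : Finset A} (h1 : Z ⊆ Y) (h2 : Y ⊆ X)
    (T : Bag D X) :
    Bag.marginal h1 (Bag.marginal h2 T) = Bag.marginal (h1.trans h2) T := by
  unfold Bag.marginal
  rw [← Finsupp.mapDomain_comp]
  rfl

theorem Bag.marginal_refl {D : A → Type} {Z : Finset A} (h : Z ⊆ Z) (S : Bag D Z) :
    Bag.marginal h S = S := by
  unfold Bag.marginal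
  have : Tup.restrict (D := D) h = id := by
    funext t; rfl
  rw [this, Finsupp.mapDomain_id]

theorem Bag.ext_refl {D : A → Type} [∀ a : A, Nonempty (D a)] {Z : Finset A}
    (h : Z ⊆ Z) (S : Bag D Z) : Bag.ext h S = S := by
  unfold Bag.ext
  have : (Tup.extend (D := D) (Z := Z) (X := Z)) = id := by
    funext t
    funext a
    simp only [Tup.extend, dif_pos a.2, id]
  rw [this, Finsupp.mapDomain_id]

theorem Bag.ext_marg {D : A → Type} [∀ a : A, Nonempty (D a)] {Z Z' Y X : Finset A}
    (hZX : Z ⊆ X) (hYX : Y ⊆ X) (hZ'Z : Z' ⊆ Z) (hZ'Y : Z' ⊆ Y)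
    (hiff : ∀ a ∈ Y, a ∈ Z → a ∈ Z') (S : Bag D Z) :
    Bag.marginal hYX (Bag.ext hZX S) = Bag.ext hZ'Y (Bag.marginal hZ'Z S) := by
  unfold Bag.marginal Bag.ext
  rw [← Finsupp.mapDomain_comp, ← Finsupp.mapDomain_comp]
  congr 1
  funext t
  funext a
  simp only [Function.comp, Tup.restrict, Tup.extend]
  by_cases h : a.1 ∈ Z'
  · rw [dif_pos h, dif_pos (hZ'Z h)]
  · rw [dif_neg h, dif_neg (fun hz => h (hiff a.1 a.2 hz))]

end Aux

/-- if a hypergraph `H` has the local-to-global consistency property for bags,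
then for every `W ⊆ V` so does the reduction of the hypergraph induced by `W` on `H`. -/
theorem stmt12 {D : A → Type} [∀ a : A, Nonempty (D a)] (H : FinHypergraph A)
    (hE : ∀ X ∈ H.E, X ⊆ H.V ∧ X.Nonempty)
    (hLGC : LGCBags D H) :
    ∀ W ⊆ H.V, LGCBags D ((H.induce W).reduction) := by
  intro W _hW R' hpc
  by_cases hne : ((H.induce W).reduction).E.Nonempty
  swap
  · exact ⟨0, fun X hX => absurd ⟨X, hX⟩ hne⟩
  obtain ⟨Z₀, hZ₀⟩ := hne
  -- membership facts about E'
  have hEmem : ∀ Z ∈ ((H.induce W).reduction).E, Z ∈ (H.induce W).E ∧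
      ¬ ∃ Y ∈ (H.induce W).E, Z ⊂ Y := by
    intro Z hZ
    exact Finset.mem_filter.mp hZ
  have htrace : ∀ Z ∈ ((H.induce W).reduction).E, ∃ X ∈ H.E, X ∩ W = Z := by
    intro Z hZ
    have h1 := (hEmem Z hZ).1
    have h2 := (Finset.mem_filter.mp h1).1
    simpa using h2
  -- choice of a maximal trace above each trace
  have hMex : ∀ X ∈ H.E, ∃ M, M ∈ ((H.induce W).reduction).E ∧ X ∩ W ⊆ M ∧
      (X ∩ W ∈ ((H.induce W).reduction).E → M = X ∩ W) := by
    intro X hX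
    by_cases hin : X ∩ W ∈ ((H.induce W).reduction).E
    · exact ⟨X ∩ W, hin, subset_rfl, fun _ => rfl⟩
    · by_cases hne2 : (X ∩ W).Nonempty
      · have hIE : X ∩ W ∈ (H.induce W).E := by
          simp only [FinHypergraph.induce, Finset.mem_filter, Finset.mem_image]
          exact ⟨⟨X, hX, rfl⟩, hne2⟩
        obtain ⟨M, hMs, hmax⟩ := Finset.exists_maximal
          (s := (H.induce W).E.filter (fun Y => X ∩ W ⊆ Y))
          ⟨X ∩ W, Finset.mem_filter.mpr ⟨hIE, subset_rfl⟩⟩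
        have hMsub : X ∩ W ⊆ M := (Finset.mem_filter.mp hMs).2
        have hMIE : M ∈ (H.induce W).E := (Finset.mem_filter.mp hMs).1
        refine ⟨M, ?_, hMsub, fun h => absurd h hin⟩
        refine Finset.mem_filter.mpr ⟨hMIE, ?_⟩
        rintro ⟨Y, hY, hMY⟩
        exact not_subset_of_ssubset hMY (hmax (Finset.mem_filter.mpr ⟨hY, hMsub.trans hMY.subset⟩) hMY.subset)
      · refine ⟨Z₀, hZ₀, ?_, fun h => absurd h hin⟩
        rw [Finset.not_nonempty_iff_eq_empty.mp hne2]
        exact Finset.empty_subset _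
  choose M hME hMsub hMeq using hMex
  have hXW : ∀ X : Finset A, X ∩ W ⊆ X := fun X => Finset.inter_subset_left
  -- the lifted family on H.E
  have hpair : ∀ (X : Finset A) (hX : X ∈ H.E) (Y : Finset A) (hY : Y ∈ H.E),
      Consistent
        (Bag.ext (hXW X) (Bag.marginal (hMsub X hX) (R' (M X hX) (hME X hX))))
        (Bag.ext (hXW Y) (Bag.marginal (hMsub Y hY) (R' (M Y hY) (hME Y hY)))) := by
    intro X hX Y hY
    obtain ⟨U, hU1, hU2⟩ := hpc (M X hX) (hME X hX) (M Y hY) (hME Y hY)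
    have hsubU : (X ∪ Y) ∩ W ⊆ M X hX ∪ M Y hY := by
      intro a ha
      rw [Finset.mem_inter, Finset.mem_union] at ha
      rw [Finset.mem_union]
      rcases ha.1 with h | h
      · exact Or.inl (hMsub X hX (Finset.mem_inter.mpr ⟨h, ha.2⟩))
      · exact Or.inr (hMsub Y hY (Finset.mem_inter.mpr ⟨h, ha.2⟩))
    have hXuW : (X ∪ Y) ∩ W ⊆ X ∪ Y := Finset.inter_subset_left
    refine ⟨Bag.ext hXuW (Bag.marginal hsubU U), ?_, ?_⟩
    · rw [Bag.ext_marg hXuW Finset.subset_union_left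
        (Z' := X ∩ W)
        (by intro a ha; rw [Finset.mem_inter] at ha ⊢;
            exact ⟨Finset.mem_union_left _ ha.1, ha.2⟩)
        (hXW X)
        (fun a haX haZ => Finset.mem_inter.mpr ⟨haX, (Finset.mem_inter.mp haZ).2⟩),
        Bag.marginal_marginal, ← hU1, Bag.marginal_marginal]
    · rw [Bag.ext_marg hXuW Finset.subset_union_right
        (Z' := Y ∩ W)
        (by intro a ha; rw [Finset.mem_inter] at ha ⊢;
            exact ⟨Finset.mem_union_right _ ha.1, ha.2⟩)
        (hXW Y)
        (fun a haY haZ => Finset.mem_inter.mpr ⟨haY, (Finset.mem_inter.mp haZ).2⟩),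
        Bag.marginal_marginal, ← hU2, Bag.marginal_marginal]
  obtain ⟨T, hT⟩ := hLGC _ hpair
  have hsupsub : ((H.induce W).reduction).E.sup id ⊆ H.E.sup id := by
    have : ((H.induce W).reduction).E.sup id ≤ H.E.sup id := by
      refine Finset.sup_le ?_
      intro Z hZ
      obtain ⟨X, hX, e⟩ := htrace Z hZ
      have h1 : (id Z : Finset A) ⊆ X := by
        rw [← e]; exact Finset.inter_subset_left
      exact le_trans (le_of_eq rfl) (h1.trans (Finset.le_sup (f := id) hX))
    exact this
  refine ⟨Bag.marginal hsupsub T, ?_⟩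
  intro Z hZ
  obtain ⟨X, hX, e⟩ := htrace Z hZ
  subst e
  calc Bag.marginal (Finset.le_sup (f := id) hZ) (Bag.marginal hsupsub T)
      = Bag.marginal ((hXW X).trans (Finset.le_sup (f := id) hX)) T :=
        Bag.marginal_marginal _ _ T
    _ = Bag.marginal (hXW X) (Bag.marginal (Finset.le_sup (f := id) hX) T) :=
        (Bag.marginal_marginal _ _ T).symm
    _ = Bag.marginal (hXW X)
          (Bag.ext (hXW X) (Bag.marginal (hMsub X hX) (R' (M X hX) (hME X hX)))) := by
        rw [hT X hX]
    _ = Bag.ext (subset_rfl : X ∩ W ⊆ X ∩ W)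
          (Bag.marginal subset_rfl (Bag.marginal (hMsub X hX) (R' (M X hX) (hME X hX)))) :=
        Bag.ext_marg _ _ _ _ (fun _ _ h => h) _
    _ = Bag.marginal (hMsub X hX) (R' (M X hX) (hME X hX)) := by
        rw [Bag.ext_refl, Bag.marginal_refl]
    _ = R' (X ∩ W) hZ := by
        have key : ∀ (m : Finset A) (hm : m ∈ ((H.induce W).reduction).E)
            (hs : X ∩ W ⊆ m), m = X ∩ W →
            Bag.marginal hs (R' m hm) = R' (X ∩ W) hZ := by
          rintro m hm hs rfl
          rw [Bag.marginal_refl]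
        exact key _ _ _ (hMeq X hX hZ)
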